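/- Let C = (1, c₂, 2c₂−1, c₄, c₂+c₄−1, 2c₄−1) with c₄ ≥ 3c₂ − 1, and let ℓ = ⌈(c₂+c₄−1)/(2c₂−1)⌉. Assume grd_C(ℓ·(2c₂−1)) = ℓ(2c₂−1) − (c₂+c₄−1) + 1 − ⌊(ℓ(2c₂−1) − (c₂+c₄−1))/c₂⌋·(c₂−1) and grd_C(ℓ·(2c₂−1)) ≤ ℓ. Then C is canonical and the subsystem (1, c₂, 2c₂−1, c₄, c₂+c₄−1) is noncanonical. -/
import Mathlib


open Finset

/-- `x` is a representation of value `v` in the coin system `c 1, …, c n`. -/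
def IsRepr (n : ℕ) (c : ℕ → ℕ) (v : ℕ) (x : ℕ → ℕ) : Prop :=
  ∑ i ∈ Finset.Icc 1 n, c i * x i = v

/-- Minimum number of coins over all representations of `v`. -/
noncomputable def opt (n : ℕ) (c : ℕ → ℕ) (v : ℕ) : ℕ :=
  sInf {k | ∃ x : ℕ → ℕ, IsRepr n c v x ∧ ∑ i ∈ Finset.Icc 1 n, x i = k}

/-- Number of coins used by the greedy algorithm to pay `v`. -/
def grd (n : ℕ) (c : ℕ → ℕ) (v : ℕ) : ℕ :=
  if hv : v = 0 then 0
  else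
    let m := ((Finset.Icc 1 n).filter (fun i => c i ≤ v)).sup c
    if hm : 0 < m then grd n c (v - m) + 1 else 0
termination_by v
decreasing_by omega

/-- The system is canonical: greedy is optimal for every positive value. -/
def Canonical (n : ℕ) (c : ℕ → ℕ) : Prop :=
  ∀ v, 0 < v → opt n c v = grd n c v

/-- `w` is a counterexample to the system. -/
def IsCex (n : ℕ) (c : ℕ → ℕ) (w : ℕ) : Prop :=
  0 < w ∧ opt n c w < grd n c w

/-- `w` is the minimum counterexample to the system. -/
def MinCex (n : ℕ) (c : ℕ → ℕ) (w : ℕ) : Prop :=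
  IsCex n c w ∧ ∀ u, IsCex n c u → w ≤ u

/-- A (currency) system: first coin is `1` and coins strictly increase. -/
def IsSystem (n : ℕ) (c : ℕ → ℕ) : Prop :=
  c 1 = 1 ∧ StrictMonoOn c (Set.Icc 1 n)

def gtwo (a r : ℕ) : ℕ := if r < a then r else r - (a - 1)
def g3 (a y : ℕ) : ℕ := y / (2 * a - 1) + gtwo a (y % (2 * a - 1))

lemma g3_lt (a y : ℕ) (hy : y < 2 * a - 1) : g3 a y = gtwo a y := by
  unfold g3
  rw [Nat.div_eq_of_lt hy, Nat.mod_eq_of_lt hy, Nat.zero_add]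

lemma g3_step (a y : ℕ) (h2 : 2 ≤ a) : g3 a (y + (2 * a - 1)) = g3 a y + 1 := by
  unfold g3
  rw [Nat.add_div_right _ (by omega), Nat.add_mod_right]
  omega

lemma g3_peel (a t : ℕ) (h2 : 2 ≤ a) (ht : 2 * a - 1 ≤ t) :
    g3 a t = g3 a (t - (2 * a - 1)) + 1 := by
  conv_lhs => rw [show t = t - (2 * a - 1) + (2 * a - 1) from by omega]
  rw [g3_step a _ h2]

lemma g3_drop (a : ℕ) (h2 : 2 ≤ a) : ∀ t, g3 a (t - (a - 1)) ≤ g3 a t := by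
  intro t
  induction t using Nat.strong_induction_on with
  | _ t ih =>
    rcases Nat.lt_or_ge t (2 * a - 1) with h | h
    · have h1 : t - (a - 1) < 2 * a - 1 := by omega
      rw [g3_lt a t h, g3_lt a _ h1]
      unfold gtwo; split_ifs <;> omega
    · rcases Nat.lt_or_ge t (2 * a - 1 + (a - 1)) with h' | h'
      · have h3 : t - (2*a-1) < 2*a-1 := by omega
        have h4 : t - (a-1) < 2*a-1 := by omega
        rw [g3_peel a t h2 h, g3_lt a _ h3, g3_lt a _ h4]
        unfold gtwo; split_ifs <;> omega
      · rw [g3_peel a t h2 h, g3_peel a (t - (a-1)) h2 (by omega),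
          show t - (a-1) - (2*a-1) = (t - (2*a-1)) - (a-1) from by omega]
        have := ih (t - (2*a-1)) (by omega)
        omega

lemma g3_add_a (a : ℕ) (h2 : 2 ≤ a) : ∀ t, g3 a (t + a) ≤ g3 a t + 1 := by
  intro t
  induction t using Nat.strong_induction_on with
  | _ t ih =>
    rcases Nat.lt_or_ge t (2 * a - 1) with h | h
    · rcases Nat.lt_or_ge (t + a) (2 * a - 1) with h' | h'
      · rw [g3_lt a _ h', g3_lt a _ h]
        unfold gtwo; split_ifs <;> omega
      · have h3 : t + a - (2*a-1) < 2*a-1 := by omega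
        rw [g3_peel a (t+a) h2 (by omega), g3_lt a _ h3, g3_lt a _ h]
        unfold gtwo; split_ifs <;> omega
    · rw [g3_peel a t h2 h, g3_peel a (t+a) h2 (by omega),
        show t + a - (2*a-1) = (t - (2*a-1)) + a from by omega]
      have := ih (t - (2*a-1)) (by omega)
      omega

lemma grd_zero (n : ℕ) (c : ℕ → ℕ) : grd n c 0 = 0 := by rw [grd]; simp

lemma sup_filter_eq (n : ℕ) (c : ℕ → ℕ) (v k : ℕ) (hk1 : 1 ≤ k) (hkn : k ≤ n)
    (hkv : c k ≤ v) (hmax : ∀ i, 1 ≤ i → i ≤ n → c i ≤ v → c i ≤ c k) :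
    ((Finset.Icc 1 n).filter (fun i => c i ≤ v)).sup c = c k := by
  apply le_antisymm
  · apply Finset.sup_le
    intro i hi
    simp only [Finset.mem_filter, Finset.mem_Icc] at hi
    exact hmax i hi.1.1 hi.1.2 hi.2
  · apply Finset.le_sup
    simp only [Finset.mem_filter, Finset.mem_Icc]
    exact ⟨⟨hk1, hkn⟩, hkv⟩

lemma grd_step (n : ℕ) (c : ℕ → ℕ) (v k : ℕ) (hv : v ≠ 0) (hk1 : 1 ≤ k) (hkn : k ≤ n)
    (hkv : c k ≤ v) (hkpos : 0 < c k)
    (hmax : ∀ i, 1 ≤ i → i ≤ n → c i ≤ v → c i ≤ c k) :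
    grd n c v = grd n c (v - c k) + 1 := by
  rw [grd, dif_neg hv]
  have hs := sup_filter_eq n c v k hk1 hkn hkv hmax
  simp only [hs, dif_pos hkpos]

lemma grd_pos (n : ℕ) (c : ℕ → ℕ) (v : ℕ) (hn : 1 ≤ n) (hc1 : c 1 = 1) (hv : 0 < v) :
    0 < grd n c v := by
  rw [grd, dif_neg (by omega)]
  have h1 : (1 : ℕ) ∈ (Finset.Icc 1 n).filter (fun i => c i ≤ v) := by
    simp only [Finset.mem_filter, Finset.mem_Icc]
    omega
  have hle : c 1 ≤ ((Finset.Icc 1 n).filter (fun i => c i ≤ v)).sup c :=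
    Finset.le_sup h1
  rw [dif_pos (by omega)]
  omega

lemma g3_decomp (a y : ℕ) (h2 : 2 ≤ a) :
    ∃ q r, y = (2 * a - 1) * q + r ∧ r < 2 * a - 1 ∧ g3 a y = q + gtwo a r := by
  refine ⟨y / (2 * a - 1), y % (2 * a - 1), (Nat.div_add_mod y (2 * a - 1)).symm,
    Nat.mod_lt _ (by omega), rfl⟩

lemma grd_repr (n : ℕ) (c : ℕ → ℕ) (hn : 1 ≤ n) (hc1 : c 1 = 1) :
    ∀ v, ∃ x, IsRepr n c v x ∧ ∑ i ∈ Finset.Icc 1 n, x i = grd n c v := by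
  intro v
  induction v using Nat.strong_induction_on with
  | _ v ih =>
    rcases Nat.eq_zero_or_pos v with h0 | h0
    · refine ⟨fun _ => 0, ?_, ?_⟩
      · unfold IsRepr
        simp [h0]
      · rw [h0, grd_zero]
        simp
    · have h1 : (1 : ℕ) ∈ (Finset.Icc 1 n).filter (fun i => c i ≤ v) := by
        simp only [Finset.mem_filter, Finset.mem_Icc]
        omega
      obtain ⟨k, hk, hsup⟩ := Finset.exists_mem_eq_sup _ ⟨1, h1⟩ c
      simp only [Finset.mem_filter, Finset.mem_Icc] at hk
      have hckpos : 0 < c k := by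
        have := Finset.le_sup (f := c) h1
        omega
      have hgr : grd n c v = grd n c (v - c k) + 1 := by
        rw [grd, dif_neg (by omega)]
        simp only [hsup, dif_pos hckpos]
      obtain ⟨x', hx', hs'⟩ := ih (v - c k) (by omega)
      have hkI : k ∈ Finset.Icc 1 n := by simp only [Finset.mem_Icc]; exact ⟨hk.1.1, hk.1.2⟩
      refine ⟨Function.update x' k (x' k + 1), ?_, ?_⟩
      · unfold IsRepr at hx' ⊢
        have e1 : c k * (x' k + 1) + ∑ j ∈ (Finset.Icc 1 n).erase k,
            c j * (Function.update x' k (x' k + 1)) j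
            = ∑ j ∈ Finset.Icc 1 n, c j * (Function.update x' k (x' k + 1)) j := by
          have := Finset.add_sum_erase (Finset.Icc 1 n)
            (fun j => c j * (Function.update x' k (x' k + 1)) j) hkI
          simpa using this
        have e2 : c k * x' k + ∑ j ∈ (Finset.Icc 1 n).erase k, c j * x' j
            = ∑ j ∈ Finset.Icc 1 n, c j * x' j :=
          Finset.add_sum_erase _ (fun j => c j * x' j) hkI
        have e3 : ∑ j ∈ (Finset.Icc 1 n).erase k,
            c j * (Function.update x' k (x' k + 1)) j
            = ∑ j ∈ (Finset.Icc 1 n).erase k, c j * x' j := by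
          apply Finset.sum_congr rfl
          intro j hj
          rw [Function.update_of_ne (Finset.ne_of_mem_erase hj)]
        have e4 : c k * (x' k + 1) = c k * x' k + c k := by
          rw [Nat.mul_add, Nat.mul_one]
        omega
      · have e1 : (Function.update x' k (x' k + 1)) k + ∑ j ∈ (Finset.Icc 1 n).erase k,
            (Function.update x' k (x' k + 1)) j
            = ∑ j ∈ Finset.Icc 1 n, (Function.update x' k (x' k + 1)) j :=
          Finset.add_sum_erase _ _ hkI
        have e2 : x' k + ∑ j ∈ (Finset.Icc 1 n).erase k, x' j
            = ∑ j ∈ Finset.Icc 1 n, x' j :=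
          Finset.add_sum_erase _ x' hkI
        have e3 : ∑ j ∈ (Finset.Icc 1 n).erase k, (Function.update x' k (x' k + 1)) j
            = ∑ j ∈ (Finset.Icc 1 n).erase k, x' j := by
          apply Finset.sum_congr rfl
          intro j hj
          rw [Function.update_of_ne (Finset.ne_of_mem_erase hj)]
        have e4 : (Function.update x' k (x' k + 1)) k = x' k + 1 :=
          Function.update_self _ _ _
        omega

section S
variable (a b ℓ : ℕ) (h2 : 2 ≤ a) (h4 : 3 * a - 1 ≤ b)
  (hL1 : a + b - 1 ≤ (2 * a - 1) * ℓ) (hL2 : (2 * a - 1) * ℓ < (a + b - 1) + (2 * a - 1))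
  (hstar : gtwo a ((2 * a - 1) * ℓ - (a + b - 1)) + 1 ≤ ℓ)

include h2 h4 hL1 hL2 hstar in
lemma S2 : ∀ y, y + 1 ≤ b → y + a ≤ g3 a y + b := by
  intro y hw
  obtain ⟨q, r, hy, hr, hg⟩ := g3_decomp a y h2
  rw [hg]
  have hcase : q + 3 ≤ ℓ ∨ q + 2 = ℓ ∨ q + 1 = ℓ ∨ ℓ ≤ q := by omega
  rcases hcase with h | h | h | h
  · have hm := Nat.mul_le_mul_left (2*a-1) h
    rw [Nat.mul_add] at hm
    simp only [gtwo] at hstar ⊢; split_ifs at hstar ⊢ <;> omega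
  · have hm : (2*a-1) * ℓ = (2*a-1)*q + (2*a-1)*2 := by rw [← h, Nat.mul_add]
    simp only [gtwo] at hstar ⊢; split_ifs at hstar ⊢ <;> omega
  · have hm : (2*a-1) * ℓ = (2*a-1)*q + (2*a-1)*1 := by rw [← h, Nat.mul_add]
    simp only [gtwo] at hstar ⊢; split_ifs at hstar ⊢ <;> omega
  · have hm := Nat.mul_le_mul_left (2*a-1) h
    simp only [gtwo] at hstar ⊢; split_ifs at hstar ⊢ <;> omega

include h2 h4 hL1 hL2 hstar in
lemma S2' : ∀ y, y + a + 1 ≤ b → y + 2 * a ≤ g3 a y + b + 1 := by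
  intro y hw
  obtain ⟨q, r, hy, hr, hg⟩ := g3_decomp a y h2
  rw [hg]
  have hcase : q + 4 ≤ ℓ ∨ q + 3 = ℓ ∨ q + 2 = ℓ ∨ q + 1 = ℓ ∨ ℓ ≤ q := by omega
  rcases hcase with h | h | h | h | h
  · have hm := Nat.mul_le_mul_left (2*a-1) h
    rw [Nat.mul_add] at hm
    simp only [gtwo] at hstar ⊢; split_ifs at hstar ⊢ <;> omega
  · have hm : (2*a-1) * ℓ = (2*a-1)*q + (2*a-1)*3 := by rw [← h, Nat.mul_add]
    simp only [gtwo] at hstar ⊢; split_ifs at hstar ⊢ <;> omega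
  · have hm : (2*a-1) * ℓ = (2*a-1)*q + (2*a-1)*2 := by rw [← h, Nat.mul_add]
    simp only [gtwo] at hstar ⊢; split_ifs at hstar ⊢ <;> omega
  · have hm : (2*a-1) * ℓ = (2*a-1)*q + (2*a-1)*1 := by rw [← h, Nat.mul_add]
    simp only [gtwo] at hstar ⊢; split_ifs at hstar ⊢ <;> omega
  · have hm := Nat.mul_le_mul_left (2*a-1) h
    simp only [gtwo] at hstar ⊢; split_ifs at hstar ⊢ <;> omega

include h2 h4 hL1 hL2 hstar in
lemma S2'' : ∀ y, y + 2 * a ≤ b → y + 3 * a ≤ g3 a y + b + 2 := by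
  intro y hw
  obtain ⟨q, r, hy, hr, hg⟩ := g3_decomp a y h2
  rw [hg]
  have hcase : q + 4 ≤ ℓ ∨ q + 3 = ℓ ∨ q + 2 = ℓ ∨ q + 1 = ℓ ∨ ℓ ≤ q := by omega
  rcases hcase with h | h | h | h | h
  · have hm := Nat.mul_le_mul_left (2*a-1) h
    rw [Nat.mul_add] at hm
    simp only [gtwo] at hstar ⊢; split_ifs at hstar ⊢ <;> omega
  · have hm : (2*a-1) * ℓ = (2*a-1)*q + (2*a-1)*3 := by rw [← h, Nat.mul_add]
    simp only [gtwo] at hstar ⊢; split_ifs at hstar ⊢ <;> omega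
  · have hm : (2*a-1) * ℓ = (2*a-1)*q + (2*a-1)*2 := by rw [← h, Nat.mul_add]
    simp only [gtwo] at hstar ⊢; split_ifs at hstar ⊢ <;> omega
  · have hm : (2*a-1) * ℓ = (2*a-1)*q + (2*a-1)*1 := by rw [← h, Nat.mul_add]
    simp only [gtwo] at hstar ⊢; split_ifs at hstar ⊢ <;> omega
  · have hm := Nat.mul_le_mul_left (2*a-1) h
    simp only [gtwo] at hstar ⊢; split_ifs at hstar ⊢ <;> omega
end S

section R
variable {c : ℕ → ℕ} {a b ℓv : ℕ} (h2 : 2 ≤ a) (h4 : 3 * a - 1 ≤ b)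
  (hc1 : c 1 = 1) (hc2 : c 2 = a) (hc3 : c 3 = 2 * a - 1) (hc4 : c 4 = b)
  (hc5 : c 5 = a + b - 1) (hc6 : c 6 = 2 * b - 1)

include h2 h4 hc1 hc2 hc3 hc4 hc5 hc6

lemma R1 {v : ℕ} (hv1 : 0 < v) (hv2 : v < a) : grd 6 c v = grd 6 c (v - 1) + 1 := by
  have h := grd_step 6 c v 1 (by omega) le_rfl (by norm_num) (by omega)
    (by omega) ?_
  · rwa [hc1] at h
  · intro i hi1 hi6 hle
    interval_cases i <;> simp only [hc1, hc2, hc3, hc4, hc5, hc6] at hle ⊢ <;> omega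

lemma R2 {v : ℕ} (hv1 : a ≤ v) (hv2 : v < 2 * a - 1) :
    grd 6 c v = grd 6 c (v - a) + 1 := by
  have h := grd_step 6 c v 2 (by omega) (by norm_num) (by norm_num) (by omega)
    (by omega) ?_
  · rwa [hc2] at h
  · intro i hi1 hi6 hle
    interval_cases i <;> simp only [hc1, hc2, hc3, hc4, hc5, hc6] at hle ⊢ <;> omega

lemma R3 {v : ℕ} (hv1 : 2 * a - 1 ≤ v) (hv2 : v < b) :
    grd 6 c v = grd 6 c (v - (2 * a - 1)) + 1 := by
  have h := grd_step 6 c v 3 (by omega) (by norm_num) (by norm_num) (by omega)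
    (by omega) ?_
  · rwa [hc3] at h
  · intro i hi1 hi6 hle
    interval_cases i <;> simp only [hc1, hc2, hc3, hc4, hc5, hc6] at hle ⊢ <;> omega

lemma R4 {v : ℕ} (hv1 : b ≤ v) (hv2 : v < a + b - 1) :
    grd 6 c v = grd 6 c (v - b) + 1 := by
  have h := grd_step 6 c v 4 (by omega) (by norm_num) (by norm_num) (by omega)
    (by omega) ?_
  · rwa [hc4] at h
  · intro i hi1 hi6 hle
    interval_cases i <;> simp only [hc1, hc2, hc3, hc4, hc5, hc6] at hle ⊢ <;> omega

lemma R5 {v : ℕ} (hv1 : a + b - 1 ≤ v) (hv2 : v < 2 * b - 1) :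
    grd 6 c v = grd 6 c (v - (a + b - 1)) + 1 := by
  have h := grd_step 6 c v 5 (by omega) (by norm_num) (by norm_num) (by omega)
    (by omega) ?_
  · rwa [hc5] at h
  · intro i hi1 hi6 hle
    interval_cases i <;> simp only [hc1, hc2, hc3, hc4, hc5, hc6] at hle ⊢ <;> omega

lemma R6 {v : ℕ} (hv1 : 2 * b - 1 ≤ v) :
    grd 6 c v = grd 6 c (v - (2 * b - 1)) + 1 := by
  have h := grd_step 6 c v 6 (by omega) (by norm_num) (by norm_num) (by omega)
    (by omega) ?_
  · rwa [hc6] at h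
  · intro i hi1 hi6 hle
    interval_cases i <;> simp only [hc1, hc2, hc3, hc4, hc5, hc6] at hle ⊢ <;> omega

lemma E1 : ∀ {v : ℕ}, v < a → grd 6 c v = v := by
  intro v
  induction v using Nat.strong_induction_on with
  | _ v ih =>
    intro hv
    rcases Nat.eq_zero_or_pos v with h | h
    · rw [h, grd_zero]
    · rw [R1 h2 h4 hc1 hc2 hc3 hc4 hc5 hc6 h hv, ih (v-1) (by omega) (by omega)]
      omega

lemma E2 : ∀ {v : ℕ}, a ≤ v → v < 2 * a - 1 → grd 6 c v = v - a + 1 := by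
  intro v hv1 hv2
  rw [R2 h2 h4 hc1 hc2 hc3 hc4 hc5 hc6 hv1 hv2,
    E1 h2 h4 hc1 hc2 hc3 hc4 hc5 hc6 (by omega)]

lemma E4 : ∀ {v : ℕ}, b ≤ v → v < a + b - 1 → grd 6 c v = v - b + 1 := by
  intro v hv1 hv2
  rw [R4 h2 h4 hc1 hc2 hc3 hc4 hc5 hc6 hv1 hv2,
    E1 h2 h4 hc1 hc2 hc3 hc4 hc5 hc6 (by omega)]

lemma Eg3 : ∀ v, v < b → grd 6 c v = g3 a v := by
  intro v
  induction v using Nat.strong_induction_on with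
  | _ v ih =>
    intro hv
    rcases Nat.lt_or_ge v a with h | h
    · rw [E1 h2 h4 hc1 hc2 hc3 hc4 hc5 hc6 h, g3_lt a v (by omega)]
      unfold gtwo
      rw [if_pos h]
    · rcases Nat.lt_or_ge v (2*a-1) with h' | h'
      · rw [E2 h2 h4 hc1 hc2 hc3 hc4 hc5 hc6 h h', g3_lt a v (by omega)]
        unfold gtwo
        rw [if_neg (by omega)]
        omega
      · rw [R3 h2 h4 hc1 hc2 hc3 hc4 hc5 hc6 h' hv,
          ih (v - (2*a-1)) (by omega) (by omega), g3_peel a v h2 h']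

variable (hL1 : a + b - 1 ≤ (2 * a - 1) * ℓv) (hL2 : (2 * a - 1) * ℓv < (a + b - 1) + (2 * a - 1))
  (hstar : gtwo a ((2 * a - 1) * ℓv - (a + b - 1)) + 1 ≤ ℓv)

include hL1 hL2 hstar

lemma J1 : ∀ t, grd 6 c (1 + t) ≤ 1 + grd 6 c t := by
  have e1 := @E1 c a b h2 h4 hc1 hc2 hc3 hc4 hc5 hc6
  have e2 := @E2 c a b h2 h4 hc1 hc2 hc3 hc4 hc5 hc6
  have e4 := @E4 c a b h2 h4 hc1 hc2 hc3 hc4 hc5 hc6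
  have r3 := @R3 c a b h2 h4 hc1 hc2 hc3 hc4 hc5 hc6
  have r4 := @R4 c a b h2 h4 hc1 hc2 hc3 hc4 hc5 hc6
  have r5 := @R5 c a b h2 h4 hc1 hc2 hc3 hc4 hc5 hc6
  have r6 := @R6 c a b h2 h4 hc1 hc2 hc3 hc4 hc5 hc6
  intro t
  induction t using Nat.strong_induction_on with
  | _ t ih =>
    rcases Nat.lt_or_ge (1 + t) a with h | h
    · rw [e1 h, e1 (show t < a by omega)]
    · rcases Nat.lt_or_ge (1 + t) (2*a-1) with h' | h'
      · rcases Nat.lt_or_ge t a with ht | ht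
        · rw [e2 h h', e1 ht]; omega
        · rw [e2 h h', e2 ht (by omega)]; omega
      · rcases Nat.lt_or_ge (1 + t) b with hb | hb
        · rcases Nat.eq_or_lt_of_le h' with heq | hgt
          · rw [r3 (by omega) hb, show 1 + t - (2*a-1) = 0 from by omega, grd_zero]
            omega
          · rw [r3 (by omega) hb, show 1 + t - (2*a-1) = 1 + (t - (2*a-1)) from by omega,
              r3 (show 2*a-1 ≤ t from by omega) (by omega)]
            have := ih (t - (2*a-1)) (by omega)
            omega
        · rcases Nat.lt_or_ge (1 + t) (a+b-1) with hB | hB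
          · rcases Nat.eq_or_lt_of_le hb with heq | hgt
            · rw [e4 hb hB, show 1 + t - b = 0 from by omega]
              omega
            · rw [e4 hb hB, e4 (show b ≤ t from by omega) (by omega)]; omega
          · rcases Nat.lt_or_ge (1 + t) (2*b-1) with hD | hD
            · rcases Nat.eq_or_lt_of_le hB with heq | hgt
              · rw [r5 (by omega) hD, show 1 + t - (a+b-1) = 0 from by omega, grd_zero]
                omega
              · rw [r5 (by omega) hD, show 1 + t - (a+b-1) = 1 + (t - (a+b-1)) from by omega,
                  r5 (show a+b-1 ≤ t from by omega) (by omega)]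
                have := ih (t - (a+b-1)) (by omega)
                omega
            · rcases Nat.eq_or_lt_of_le hD with heq | hgt
              · rw [r6 (by omega), show 1 + t - (2*b-1) = 0 from by omega, grd_zero]
                omega
              · rw [r6 (by omega), show 1 + t - (2*b-1) = 1 + (t - (2*b-1)) from by omega,
                  r6 (show 2*b-1 ≤ t from by omega)]
                have := ih (t - (2*b-1)) (by omega)
                omega

lemma Ja : ∀ t, grd 6 c (a + t) ≤ 1 + grd 6 c t := by
  have e1 := @E1 c a b h2 h4 hc1 hc2 hc3 hc4 hc5 hc6
  have e2 := @E2 c a b h2 h4 hc1 hc2 hc3 hc4 hc5 hc6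
  have e4 := @E4 c a b h2 h4 hc1 hc2 hc3 hc4 hc5 hc6
  have eg := @Eg3 c a b h2 h4 hc1 hc2 hc3 hc4 hc5 hc6
  have r3 := @R3 c a b h2 h4 hc1 hc2 hc3 hc4 hc5 hc6
  have r4 := @R4 c a b h2 h4 hc1 hc2 hc3 hc4 hc5 hc6
  have r5 := @R5 c a b h2 h4 hc1 hc2 hc3 hc4 hc5 hc6
  have r6 := @R6 c a b h2 h4 hc1 hc2 hc3 hc4 hc5 hc6
  have s2 := S2 a b ℓv h2 h4 hL1 hL2 hstar
  have s2' := S2' a b ℓv h2 h4 hL1 hL2 hstar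
  intro t
  induction t using Nat.strong_induction_on with
  | _ t ih =>
    rcases Nat.lt_or_ge t (a-1) with h | h
    · rw [e2 (by omega) (by omega), e1 (show t < a from by omega)]; omega
    · rcases Nat.eq_or_lt_of_le h with heq | h
      · -- t = a - 1, a + t = 2a-1
        rw [r3 (by omega) (by omega), show a + t - (2*a-1) = 0 from by omega, grd_zero]
        omega
      · rcases Nat.lt_or_ge t (2*a-1) with h' | h'
        · -- a ≤ t ≤ 2a-2
          rw [r3 (by omega) (show a + t < b from by omega),
            show a + t - (2*a-1) = t - (a-1) from by omega, e1 (by omega),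
            e2 (by omega) h']
          omega
        · rcases Nat.lt_or_ge (a + t) b with hb | hb
          · -- recursion zone, coin 2a-1
            rw [r3 (by omega) hb, show a + t - (2*a-1) = a + (t - (2*a-1)) from by omega,
              r3 h' (by omega)]
            have := ih (t - (2*a-1)) (by omega)
            omega
          · rcases Nat.lt_or_ge t b with htb | htb
            · rcases Nat.lt_or_ge (a + t) (a+b-1) with hB | hB
              · -- b ≤ a+t ≤ a+b-2 : use S2
                rw [e4 hb hB, eg t htb]
                have := s2 t (by omega)
                omega
              · -- a + t = a+b-1
                have : a + t = a+b-1 := by omega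
                rw [r5 (by omega) (by omega), show a + t - (a+b-1) = 0 from by omega,
                  grd_zero]
                omega
            · rcases Nat.lt_or_ge t (a+b-1) with htB | htB
              · -- b ≤ t < a+b-1
                rw [r5 (by omega) (show a + t < 2*b-1 from by omega),
                  show a + t - (a+b-1) = t - (b-1) from by omega, e1 (by omega),
                  e4 htb htB]
                omega
              · rcases Nat.lt_or_ge (a + t) (2*b-1) with hD | hD
                · -- recursion zone, coin a+b-1
                  rw [r5 (by omega) hD,
                    show a + t - (a+b-1) = a + (t - (a+b-1)) from by omega,
                    r5 htB (by omega)]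
                  have := ih (t - (a+b-1)) (by omega)
                  omega
                · rcases Nat.lt_or_ge t (2*b-1) with htD | htD
                  · -- a+b-1 ≤ t ≤ 2b-2, a+t ≥ 2b-1 : use S2'
                    rw [r6 hD, e1 (show a + t - (2*b-1) < a from by omega),
                      r5 htB htD, eg (t - (a+b-1)) (by omega)]
                    have := s2' (t - (a+b-1)) (by omega)
                    omega
                  · -- recursion zone, coin 2b-1
                    rw [r6 hD, show a + t - (2*b-1) = a + (t - (2*b-1)) from by omega,
                      r6 htD]
                    have := ih (t - (2*b-1)) (by omega)
                    omega

lemma JA : ∀ t, grd 6 c ((2*a-1) + t) ≤ 1 + grd 6 c t := by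
  have e1 := @E1 c a b h2 h4 hc1 hc2 hc3 hc4 hc5 hc6
  have e2 := @E2 c a b h2 h4 hc1 hc2 hc3 hc4 hc5 hc6
  have e4 := @E4 c a b h2 h4 hc1 hc2 hc3 hc4 hc5 hc6
  have eg := @Eg3 c a b h2 h4 hc1 hc2 hc3 hc4 hc5 hc6
  have r3 := @R3 c a b h2 h4 hc1 hc2 hc3 hc4 hc5 hc6
  have r5 := @R5 c a b h2 h4 hc1 hc2 hc3 hc4 hc5 hc6
  have r6 := @R6 c a b h2 h4 hc1 hc2 hc3 hc4 hc5 hc6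
  have s2 := S2 a b ℓv h2 h4 hL1 hL2 hstar
  have s2' := S2' a b ℓv h2 h4 hL1 hL2 hstar
  have s2'' := S2'' a b ℓv h2 h4 hL1 hL2 hstar
  intro t
  induction t using Nat.strong_induction_on with
  | _ t ih =>
    rcases Nat.lt_or_ge ((2*a-1) + t) b with hb | hb
    · -- greedy coin 2a-1, remainder t
      rw [r3 (by omega) hb, show (2*a-1) + t - (2*a-1) = t from by omega]
      omega
    · rcases Nat.lt_or_ge t (2*a-1) with h' | h'
      · -- a ≤ t ≤ 2a-2 forced (t ≥ b - (2a-1) ≥ a)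
        rw [e4 hb (show (2*a-1) + t < a + b - 1 from by omega),
          e2 (show a ≤ t from by omega) h']
        omega
      · rcases Nat.lt_or_ge t b with htb | htb
        · rcases Nat.lt_or_ge ((2*a-1) + t) (a+b-1) with hB | hB
          · -- b ≤ A+t < B : S2'
            rw [e4 hb hB, eg t htb]
            have := s2' t (by omega)
            omega
          · -- B ≤ A+t < D, t < b : S2
            rw [r5 hB (show (2*a-1) + t < 2*b-1 from by omega),
              show (2*a-1) + t - (a+b-1) = t - (b-a) from by omega,
              e1 (show t - (b-a) < a from by omega), eg t htb]
            have := s2 t (by omega)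
            omega
        · rcases Nat.lt_or_ge t (a+b-1) with htB | htB
          · -- b ≤ t < B
            rw [r5 (by omega) (show (2*a-1) + t < 2*b-1 from by omega),
              show (2*a-1) + t - (a+b-1) = t - (b-a) from by omega,
              e2 (by omega) (by omega), e4 htb htB]
            omega
          · rcases Nat.lt_or_ge ((2*a-1) + t) (2*b-1) with hD | hD
            · -- recursion zone, coin a+b-1
              rw [r5 (by omega) hD,
                show (2*a-1) + t - (a+b-1) = (2*a-1) + (t - (a+b-1)) from by omega,
                r5 htB (by omega)]
              have := ih (t - (a+b-1)) (by omega)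
              omega
            · rcases Nat.lt_or_ge t (2*b-1) with htD | htD
              · -- B ≤ t < D, A + t ≥ D
                rw [r6 hD, r5 htB htD, eg ((2*a-1) + t - (2*b-1)) (by omega),
                  eg (t - (a+b-1)) (by omega),
                  g3_lt a ((2*a-1) + t - (2*b-1)) (by omega)]
                rcases Nat.lt_or_ge ((2*a-1) + t - (2*b-1)) a with hu | hu
                · have := s2'' (t - (a+b-1)) (by omega)
                  simp only [gtwo]
                  rw [if_pos hu]
                  omega
                · have := s2' (t - (a+b-1)) (by omega)
                  simp only [gtwo]
                  rw [if_neg (by omega)]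
                  omega
              · -- recursion, coin 2b-1
                rw [r6 hD, show (2*a-1) + t - (2*b-1) = (2*a-1) + (t - (2*b-1)) from by omega,
                  r6 htD]
                have := ih (t - (2*b-1)) (by omega)
                omega

lemma Jb : ∀ t, grd 6 c (b + t) ≤ 1 + grd 6 c t ∧ grd 6 c t ≤ grd 6 c (t + (b-1)) := by
  have e1 := @E1 c a b h2 h4 hc1 hc2 hc3 hc4 hc5 hc6
  have e2 := @E2 c a b h2 h4 hc1 hc2 hc3 hc4 hc5 hc6
  have e4 := @E4 c a b h2 h4 hc1 hc2 hc3 hc4 hc5 hc6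
  have eg := @Eg3 c a b h2 h4 hc1 hc2 hc3 hc4 hc5 hc6
  have r5 := @R5 c a b h2 h4 hc1 hc2 hc3 hc4 hc5 hc6
  have r6 := @R6 c a b h2 h4 hc1 hc2 hc3 hc4 hc5 hc6
  intro t
  induction t using Nat.strong_induction_on with
  | _ t ih =>
    constructor
    · rcases Nat.lt_or_ge t (a-1) with h | h
      · rw [e4 (by omega) (by omega), e1 (show t < a from by omega)]; omega
      · rcases Nat.lt_or_ge t (b-1) with h' | h'
        · rw [r5 (by omega) (show b + t < 2*b-1 from by omega),
            show b + t - (a+b-1) = t - (a-1) from by omega, eg (t - (a-1)) (by omega),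
            eg t (by omega)]
          have := g3_drop a h2 t
          omega
        · rcases Nat.eq_or_lt_of_le h' with heq | h''
          · rw [r6 (show 2*b-1 ≤ b + t from by omega),
              show b + t - (2*b-1) = 0 from by omega, grd_zero]
            omega
          · rw [r6 (show 2*b-1 ≤ b + t from by omega),
              show b + t - (2*b-1) = t - (b-1) from by omega]
            have hm := (ih (t - (b-1)) (by omega)).2
            rw [show t - (b-1) + (b-1) = t from by omega] at hm
            omega
    · rcases Nat.eq_zero_or_pos t with h0 | h0
      · rw [h0, grd_zero]; omega
      · rcases Nat.lt_or_ge t a with h | h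
        · rw [e4 (v := t + (b-1)) (by omega) (by omega), e1 h]; omega
        · rcases Nat.lt_or_ge t b with h' | h'
          · rw [r5 (v := t + (b-1)) (by omega) (show t + (b-1) < 2*b-1 from by omega),
              show t + (b-1) - (a+b-1) = t - a from by omega, eg (t - a) (by omega),
              eg t h']
            have := g3_add_a a h2 (t - a)
            rw [show t - a + a = t from by omega] at this
            omega
          · rw [r6 (v := t + (b-1)) (show 2*b-1 ≤ t + (b-1) from by omega),
              show t + (b-1) - (2*b-1) = t - b from by omega]
            have hm := (ih (t - b) (by omega)).1
            rw [show b + (t - b) = t from by omega] at hm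
            omega

lemma JB : ∀ t, grd 6 c ((a+b-1) + t) ≤ 1 + grd 6 c t ∧
    grd 6 c t ≤ grd 6 c (t + (b-a)) := by
  have e1 := @E1 c a b h2 h4 hc1 hc2 hc3 hc4 hc5 hc6
  have e2 := @E2 c a b h2 h4 hc1 hc2 hc3 hc4 hc5 hc6
  have e4 := @E4 c a b h2 h4 hc1 hc2 hc3 hc4 hc5 hc6
  have eg := @Eg3 c a b h2 h4 hc1 hc2 hc3 hc4 hc5 hc6
  have r5 := @R5 c a b h2 h4 hc1 hc2 hc3 hc4 hc5 hc6
  have r6 := @R6 c a b h2 h4 hc1 hc2 hc3 hc4 hc5 hc6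
  have s2 := S2 a b ℓv h2 h4 hL1 hL2 hstar
  have s2' := S2' a b ℓv h2 h4 hL1 hL2 hstar
  intro t
  induction t using Nat.strong_induction_on with
  | _ t ih =>
    constructor
    · rcases Nat.lt_or_ge t (b-a) with h | h
      · rw [r5 (by omega) (show (a+b-1) + t < 2*b-1 from by omega),
          show (a+b-1) + t - (a+b-1) = t from by omega]
        omega
      · rw [r6 (show 2*b-1 ≤ (a+b-1) + t from by omega),
          show (a+b-1) + t - (2*b-1) = t - (b-a) from by omega]
        have hm := (ih (t - (b-a)) (by omega)).2
        rw [show t - (b-a) + (b-a) = t from by omega] at hm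
        omega
    · rcases Nat.eq_zero_or_pos t with h0 | h0
      · rw [h0, grd_zero]; omega
      · rcases Nat.lt_or_ge t a with h | h
        · rw [eg (t + (b-a)) (by omega), e1 h]
          have := s2 (t + (b-a)) (by omega)
          omega
        · rcases Nat.lt_or_ge t (2*a-1) with h' | h'
          · rw [e4 (v := t + (b-a)) (by omega) (show t + (b-a) < a+b-1 from by omega), e2 h h']
            omega
          · rcases Nat.lt_or_ge t b with hb | hb
            · rw [r5 (v := t + (b-a)) (by omega) (show t + (b-a) < 2*b-1 from by omega),
                show t + (b-a) - (a+b-1) = t - (2*a-1) from by omega,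
                eg (t - (2*a-1)) (by omega), eg t hb, g3_peel a t h2 h']
            · rcases Nat.lt_or_ge t (a+b-1) with hB | hB
              · rw [r5 (v := t + (b-a)) (by omega) (show t + (b-a) < 2*b-1 from by omega),
                  show t + (b-a) - (a+b-1) = t - (2*a-1) from by omega,
                  eg (t - (2*a-1)) (by omega), e4 hb hB]
                have := s2' (t - (2*a-1)) (by omega)
                omega
              · rw [r6 (v := t + (b-a)) (show 2*b-1 ≤ t + (b-a) from by omega),
                  show t + (b-a) - (2*b-1) = t - (a+b-1) from by omega]
                have hm := (ih (t - (a+b-1)) (by omega)).1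
                rw [show (a+b-1) + (t - (a+b-1)) = t from by omega] at hm
                omega

lemma JD : ∀ t, grd 6 c ((2*b-1) + t) ≤ 1 + grd 6 c t := by
  have r6 := @R6 c a b h2 h4 hc1 hc2 hc3 hc4 hc5 hc6
  intro t
  rw [r6 (by omega), show (2*b-1) + t - (2*b-1) = t from by omega]
  omega

lemma coin_step : ∀ i, 1 ≤ i → i ≤ 6 → ∀ t, grd 6 c (c i + t) ≤ 1 + grd 6 c t := by
  intro i hi1 hi6 t
  interval_cases i
  · rw [hc1]; exact J1 h2 h4 hc1 hc2 hc3 hc4 hc5 hc6 hL1 hL2 hstar t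
  · rw [hc2]; exact Ja h2 h4 hc1 hc2 hc3 hc4 hc5 hc6 hL1 hL2 hstar t
  · rw [hc3]; exact JA h2 h4 hc1 hc2 hc3 hc4 hc5 hc6 hL1 hL2 hstar t
  · rw [hc4]; exact (Jb h2 h4 hc1 hc2 hc3 hc4 hc5 hc6 hL1 hL2 hstar t).1
  · rw [hc5]; exact (JB h2 h4 hc1 hc2 hc3 hc4 hc5 hc6 hL1 hL2 hstar t).1
  · rw [hc6]; exact JD h2 h4 hc1 hc2 hc3 hc4 hc5 hc6 hL1 hL2 hstar t

lemma grd_le_repr : ∀ v x, IsRepr 6 c v x → grd 6 c v ≤ ∑ i ∈ Finset.Icc 1 6, x i := by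
  intro v
  induction v using Nat.strong_induction_on with
  | _ v ih =>
    intro x hx
    rcases Nat.eq_zero_or_pos v with h0 | h0
    · rw [h0, grd_zero]; omega
    · unfold IsRepr at hx
      obtain ⟨i, hiI, hi0⟩ := Finset.exists_ne_zero_of_sum_ne_zero (by omega :
        ∑ i ∈ Finset.Icc 1 6, c i * x i ≠ 0)
      have hi16 : 1 ≤ i ∧ i ≤ 6 := by simpa [Finset.mem_Icc] using hiI
      have hxi : 1 ≤ x i := by
        rcases Nat.eq_zero_or_pos (x i) with h | h
        · exact absurd (by rw [h, Nat.mul_zero]) hi0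
        · exact h
      have hci : 1 ≤ c i := by
        rcases Nat.eq_zero_or_pos (c i) with h | h
        · exact absurd (by rw [h, Nat.zero_mul]) hi0
        · exact h
      have hsingle : c i * x i ≤ v := by
        rw [← hx]
        exact Finset.single_le_sum (f := fun j => c j * x j) (fun j _ => Nat.zero_le _) hiI
      have hciv : c i ≤ v := le_trans (Nat.le_mul_of_pos_right _ (by omega)) hsingle
      set x' : ℕ → ℕ := Function.update x i (x i - 1) with hx'
      have hsum1 : c i * x i + ∑ j ∈ (Finset.Icc 1 6).erase i, c j * x j
          = ∑ j ∈ Finset.Icc 1 6, c j * x j :=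
        Finset.add_sum_erase _ (fun j => c j * x j) hiI
      have hsum2 : c i * x' i + ∑ j ∈ (Finset.Icc 1 6).erase i, c j * x' j
          = ∑ j ∈ Finset.Icc 1 6, c j * x' j :=
        Finset.add_sum_erase _ (fun j => c j * x' j) hiI
      have hsame : ∑ j ∈ (Finset.Icc 1 6).erase i, c j * x' j
          = ∑ j ∈ (Finset.Icc 1 6).erase i, c j * x j := by
        apply Finset.sum_congr rfl
        intro j hj
        rw [hx', Function.update_of_ne (Finset.ne_of_mem_erase hj)]
      have hxi' : x' i = x i - 1 := by rw [hx', Function.update_self]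
      have hmul : c i * (x i - 1) + c i = c i * x i := by
        rw [← Nat.mul_succ]
        congr 1
        omega
      rw [hxi'] at hsum2
      have hrepr' : IsRepr 6 c (v - c i) x' := by
        unfold IsRepr
        omega
      have hIH := ih (v - c i) (by omega) x' hrepr'
      have hxsum1 : x i + ∑ j ∈ (Finset.Icc 1 6).erase i, x j
          = ∑ j ∈ Finset.Icc 1 6, x j := Finset.add_sum_erase _ x hiI
      have hxsum2 : x' i + ∑ j ∈ (Finset.Icc 1 6).erase i, x' j
          = ∑ j ∈ Finset.Icc 1 6, x' j := Finset.add_sum_erase _ x' hiI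
      have hxsame : ∑ j ∈ (Finset.Icc 1 6).erase i, x' j
          = ∑ j ∈ (Finset.Icc 1 6).erase i, x j := by
        apply Finset.sum_congr rfl
        intro j hj
        rw [hx', Function.update_of_ne (Finset.ne_of_mem_erase hj)]
      have hstep := coin_step h2 h4 hc1 hc2 hc3 hc4 hc5 hc6 hL1 hL2 hstar
        i hi16.1 hi16.2 (v - c i)
      rw [show c i + (v - c i) = v from by omega] at hstep
      omega

lemma opt_eq_grd6 : ∀ v, opt 6 c v = grd 6 c v := by
  intro v
  obtain ⟨xg, hxg, hsg⟩ := grd_repr 6 c (by norm_num) hc1 v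
  have hne : {k | ∃ x : ℕ → ℕ, IsRepr 6 c v x ∧ ∑ i ∈ Finset.Icc 1 6, x i = k}.Nonempty :=
    ⟨grd 6 c v, xg, hxg, hsg⟩
  apply le_antisymm
  · exact Nat.sInf_le ⟨xg, hxg, hsg⟩
  · obtain ⟨x, hx, hs⟩ := Nat.sInf_mem hne
    have hb := grd_le_repr h2 h4 hc1 hc2 hc3 hc4 hc5 hc6 hL1 hL2 hstar v x hx
    calc grd 6 c v ≤ ∑ i ∈ Finset.Icc 1 6, x i := hb
      _ = opt 6 c v := hs

end R

section N5
variable {c : ℕ → ℕ} {a b : ℕ} (h2 : 2 ≤ a) (h4 : 3 * a - 1 ≤ b)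
  (hc1 : c 1 = 1) (hc2 : c 2 = a) (hc3 : c 3 = 2 * a - 1) (hc4 : c 4 = b)
  (hc5 : c 5 = a + b - 1)

include h2 h4 hc1 hc2 hc3 hc4 hc5

lemma grd5_big : 3 ≤ grd 5 c (2 * b) := by
  have s1 : grd 5 c (2*b) = grd 5 c (2*b - (a+b-1)) + 1 := by
    have h := grd_step 5 c (2*b) 5 (by omega) (by norm_num) (by norm_num)
      (by rw [hc5]; omega) (by rw [hc5]; omega) ?_
    · rwa [hc5] at h
    · intro i hi1 hi5 hle
      interval_cases i <;> simp only [hc1, hc2, hc3, hc4, hc5] at hle ⊢ <;> omega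
  have s2 : grd 5 c (b - a + 1) = grd 5 c (b - a + 1 - (2*a-1)) + 1 := by
    have h := grd_step 5 c (b - a + 1) 3 (by omega) (by norm_num) (by norm_num)
      (by rw [hc3]; omega) (by rw [hc3]; omega) ?_
    · rwa [hc3] at h
    · intro i hi1 hi5 hle
      interval_cases i <;> simp only [hc1, hc2, hc3, hc4, hc5] at hle ⊢ <;> omega
  have s3 : 0 < grd 5 c (b - a + 1 - (2*a-1)) :=
    grd_pos 5 c _ (by norm_num) hc1 (by omega)
  rw [show 2*b - (a+b-1) = b - a + 1 from by omega] at s1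
  omega

lemma opt5_small : opt 5 c (2 * b) ≤ 2 := by
  apply Nat.sInf_le
  refine ⟨fun j => if j = 4 then 2 else 0, ?_, ?_⟩
  · unfold IsRepr
    rw [show (Finset.Icc 1 5 : Finset ℕ) = {1, 2, 3, 4, 5} from by decide]
    simp [hc4]
    omega
  · rw [show (Finset.Icc 1 5 : Finset ℕ) = {1, 2, 3, 4, 5} from by decide]
    simp

lemma not_can5 : ¬ Canonical 5 c := by
  intro hcan
  have h := hcan (2*b) (by omega)
  have h1 := grd5_big h2 h4 hc1 hc2 hc3 hc4 hc5
  have h2' := opt5_small h2 h4 hc1 hc2 hc3 hc4 hc5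
  omega

end N5

theorem family_b_canonical (c : ℕ → ℕ) (c2 c4 : ℕ) (h2 : 1 < c2)
    (h4 : 3 * c2 - 1 ≤ c4)
    (hc1 : c 1 = 1) (hc2 : c 2 = c2) (hc3 : c 3 = 2 * c2 - 1) (hc4 : c 4 = c4)
    (hc5 : c 5 = c2 + c4 - 1) (hc6 : c 6 = 2 * c4 - 1)
    (ℓ : ℕ) (hℓ : ℓ = (c 5 + c 3 - 1) / c 3)
    (hg : grd 6 c (ℓ * c 3) =
      ℓ * c 3 - c 5 + 1 - ((ℓ * c 3 - c 5) / c 2) * (c 2 - 1))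
    (hgl : grd 6 c (ℓ * c 3) ≤ ℓ) :
    Canonical 6 c ∧ ¬ Canonical 5 c := by
  clear hg
  have h2' : 2 ≤ c2 := h2
  rw [hc5, hc3] at hℓ
  have hd := Nat.div_add_mod ((c2 + c4 - 1) + (2 * c2 - 1) - 1) (2 * c2 - 1)
  have hm : ((c2 + c4 - 1) + (2 * c2 - 1) - 1) % (2 * c2 - 1) < 2 * c2 - 1 :=
    Nat.mod_lt _ (by omega)
  rw [← hℓ] at hd
  have hL1 : c2 + c4 - 1 ≤ (2 * c2 - 1) * ℓ := by omega
  have hL2 : (2 * c2 - 1) * ℓ < (c2 + c4 - 1) + (2 * c2 - 1) := by omega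
  rw [hc3, Nat.mul_comm] at hgl
  have hra : (2 * c2 - 1) * ℓ - (c2 + c4 - 1) < 2 * c2 - 1 := by omega
  have hgeq : grd 6 c ((2 * c2 - 1) * ℓ) =
      gtwo c2 ((2 * c2 - 1) * ℓ - (c2 + c4 - 1)) + 1 := by
    rw [R5 h2' h4 hc1 hc2 hc3 hc4 hc5 hc6 hL1 (by omega),
      Eg3 h2' h4 hc1 hc2 hc3 hc4 hc5 hc6 _ (by omega),
      g3_lt c2 _ hra]
  have hstar : gtwo c2 ((2 * c2 - 1) * ℓ - (c2 + c4 - 1)) + 1 ≤ ℓ := by omega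
  constructor
  · intro v _
    exact opt_eq_grd6 h2' h4 hc1 hc2 hc3 hc4 hc5 hc6 hL1 hL2 hstar v
  · exact not_can5 h2' h4 hc1 hc2 hc3 hc4 hc5
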